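/- Let F be a k-Sperner family of vectors in L(k₁,…,kₙ). Then |F| ≤ f(k₁,…,kₙ,k), where f(k₁,…,kₙ,k) is the sum of the k largest among the rank sizes |L_i|. -/

import Mathlib

open Finset

variable {α : Type*} [DecidableEq α] [PartialOrder α]

/-- A symmetric chain for rank function `rk` with top rank `N`. -/
def IsSymChain (rk : α → ℕ) (N : ℕ) (C : Finset α) : Prop :=
  ∃ r, 2 * r ≤ N ∧ (∀ x ∈ C, ∀ y ∈ C, rk x ≤ rk y → x ≤ y) ∧
    C.image rk = Finset.Icc r (N - r)

/-- A symmetric chain decomposition. -/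
def IsSCD (rk : α → ℕ) (N : ℕ) (D : Finset (Finset α)) : Prop :=
  (∀ C ∈ D, IsSymChain rk N C) ∧ (∀ x : α, ∃ C ∈ D, x ∈ C) ∧
    ∀ C ∈ D, ∀ C' ∈ D, C ≠ C' → Disjoint C C'

lemma IsSymChain.injOn {rk : α → ℕ} {N : ℕ} {C : Finset α}
    (h : ∀ x ∈ C, ∀ y ∈ C, rk x ≤ rk y → x ≤ y) :
    ∀ x ∈ C, ∀ y ∈ C, rk x = rk y → x = y := by
  intro x hx y hy hxy
  exact le_antisymm (h x hx y hy hxy.le) (h y hy x hx hxy.ge)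

section Prod

variable [DecidableEq α]

/-- SCD of a product with a chain. -/
lemma IsSCD.prod {rk : α → ℕ} {N : ℕ} {D : Finset (Finset α)}
    (hD : IsSCD rk N D) (m : ℕ) (hm : 1 ≤ m) :
    ∃ D' : Finset (Finset (α × Fin m)),
      IsSCD (fun p => rk p.1 + (p.2 : ℕ)) (N + (m - 1)) D' := by
  classical
  obtain ⟨h1, h2, h3⟩ := hD
  choose! r hr1 hr2 hr3 using h1
  set b := m - 1 with hb
  -- the new chains
  set nc : Finset α → ℕ → Finset (α × Fin m) := fun C t =>
    (C ×ˢ Finset.univ).filter (fun p =>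
      (rk p.1 = r C + t ∧ (p.2 : ℕ) + t ≤ b) ∨ (r C + t < rk p.1 ∧ (p.2 : ℕ) + t = b))
    with hnc
  have hmem : ∀ C t (p : α × Fin m), p ∈ nc C t ↔ p.1 ∈ C ∧
      ((rk p.1 = r C + t ∧ (p.2 : ℕ) + t ≤ b) ∨ (r C + t < rk p.1 ∧ (p.2 : ℕ) + t = b)) := by
    intro C t p
    simp [hnc, Finset.mem_filter, Finset.mem_product]
  -- rank bounds for members of a chain
  have hrkmem : ∀ C ∈ D, ∀ x ∈ C, r C ≤ rk x ∧ rk x ≤ N - r C := by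
    intro C hC x hx
    have : rk x ∈ C.image rk := Finset.mem_image_of_mem rk hx
    rw [hr3 C hC] at this
    exact Finset.mem_Icc.mp this
  have hrksurj : ∀ C ∈ D, ∀ ρ, r C ≤ ρ → ρ ≤ N - r C → ∃ x ∈ C, rk x = ρ := by
    intro C hC ρ h₁ h₂
    have : ρ ∈ C.image rk := by rw [hr3 C hC]; exact Finset.mem_Icc.mpr ⟨h₁, h₂⟩
    simpa using this
  have hvlt : ∀ v : Fin m, (v : ℕ) ≤ b := fun v => by have := v.isLt; omega
  refine ⟨D.biUnion (fun C => (Finset.range (min (N - 2 * r C) b + 1)).image (nc C)),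
    ?_, ?_, ?_⟩
  · -- each is a symmetric chain
    intro C' hC'
    simp only [Finset.mem_biUnion, Finset.mem_image, Finset.mem_range] at hC'
    obtain ⟨C, hC, t, ht, rfl⟩ := hC'
    have h2r := hr1 C hC
    have hta : t ≤ N - 2 * r C := by omega
    have htb : t ≤ b := by omega
    refine ⟨r C + t, by omega, ?_, ?_⟩
    · -- chain order
      rintro ⟨x, v⟩ hx ⟨y, w⟩ hy hle
      rw [hmem] at hx hy
      obtain ⟨hxC, hx⟩ := hx
      obtain ⟨hyC, hy⟩ := hy
      simp only at hle hx hy ⊢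
      rw [Prod.mk_le_mk]
      rcases hx with ⟨hx1, hx2⟩ | ⟨hx1, hx2⟩ <;> rcases hy with ⟨hy1, hy2⟩ | ⟨hy1, hy2⟩
      · exact ⟨hr2 C hC x hxC y hyC (by omega), by rw [Fin.le_def]; omega⟩
      · exact ⟨hr2 C hC x hxC y hyC (by omega), by rw [Fin.le_def]; omega⟩
      · exact absurd hle (by omega)
      · exact ⟨hr2 C hC x hxC y hyC (by omega), by rw [Fin.le_def]; omega⟩
    · -- image is the symmetric interval
      ext s
      simp only [Finset.mem_image, Finset.mem_Icc]
      constructor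
      · rintro ⟨⟨x, v⟩, hp, rfl⟩
        rw [hmem] at hp
        obtain ⟨hxC, hp⟩ := hp
        have := (hrkmem C hC x hxC).2
        simp only at *
        rcases hp with ⟨h₁, h₂⟩ | ⟨h₁, h₂⟩ <;> omega
      · intro ⟨hs1, hs2⟩
        by_cases hcase : s ≤ r C + b
        · obtain ⟨x, hxC, hx⟩ := hrksurj C hC (r C + t) (by omega) (by omega)
          refine ⟨(x, ⟨s - (r C + t), by omega⟩), ?_, by dsimp only; omega⟩
          rw [hmem]
          refine ⟨hxC, Or.inl ⟨hx, ?_⟩⟩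
          dsimp only; omega
        · obtain ⟨x, hxC, hx⟩ := hrksurj C hC (s - (b - t)) (by omega) (by omega)
          refine ⟨(x, ⟨b - t, by omega⟩), ?_, by dsimp only; omega⟩
          rw [hmem]
          refine ⟨hxC, Or.inr ⟨by dsimp only; omega, ?_⟩⟩
          dsimp only; omega
  · -- cover
    rintro ⟨x, v⟩
    obtain ⟨C, hC, hx⟩ := h2 x
    have h2r := hr1 C hC
    have hrx := hrkmem C hC x hx
    have hv := hvlt v
    by_cases hcase : (rk x - r C) + (v : ℕ) ≤ b
    · refine ⟨nc C (rk x - r C), ?_, ?_⟩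
      · simp only [Finset.mem_biUnion, Finset.mem_image, Finset.mem_range]
        exact ⟨C, hC, rk x - r C, by omega, rfl⟩
      · rw [hmem]; dsimp only; exact ⟨hx, Or.inl ⟨by omega, by omega⟩⟩
    · refine ⟨nc C (b - (v : ℕ)), ?_, ?_⟩
      · simp only [Finset.mem_biUnion, Finset.mem_image, Finset.mem_range]
        exact ⟨C, hC, b - (v : ℕ), by omega, rfl⟩
      · rw [hmem]; dsimp only; exact ⟨hx, Or.inr ⟨by omega, by omega⟩⟩
  · -- disjointness
    intro D1 hD1 D2 hD2 hne
    simp only [Finset.mem_biUnion, Finset.mem_image, Finset.mem_range] at hD1 hD2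
    obtain ⟨C, hC, t, ht, rfl⟩ := hD1
    obtain ⟨C', hC', t', ht', rfl⟩ := hD2
    rw [Finset.disjoint_left]
    intro p hp hp'
    rw [hmem] at hp hp'
    obtain ⟨hpC, hp⟩ := hp
    obtain ⟨hpC', hp'⟩ := hp'
    have hCC : C = C' := by
      by_contra hcc
      exact (Finset.disjoint_left.mp (h3 C hC C' hC' hcc)) hpC hpC'
    subst hCC
    have : t = t' := by rcases hp with ⟨h₁,h₂⟩|⟨h₁,h₂⟩ <;> rcases hp' with ⟨h₃,h₄⟩|⟨h₃,h₄⟩ <;> omega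
    subst this
    exact hne rfl

end Prod

/-- Transport an SCD along an order-equivalence preserving rank. -/
lemma IsSCD.map {β : Type*} [DecidableEq β] [PartialOrder β]
    (e : β ≃ α) (he : ∀ x y : β, x ≤ y ↔ e x ≤ e y)
    {rk : α → ℕ} {N : ℕ} {D : Finset (Finset α)} (hD : IsSCD rk N D) :
    IsSCD (fun x => rk (e x)) N (D.image (Finset.image e.symm)) := by
  obtain ⟨h1, h2, h3⟩ := hD
  refine ⟨?_, ?_, ?_⟩
  · intro C' hC'
    simp only [Finset.mem_image] at hC'
    obtain ⟨C, hC, rfl⟩ := hC'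
    obtain ⟨r, hr1, hr2, hr3⟩ := h1 C hC
    refine ⟨r, hr1, ?_, ?_⟩
    · intro x hx y hy hxy
      simp only [Finset.mem_image] at hx hy
      obtain ⟨u, hu, rfl⟩ := hx
      obtain ⟨w, hw, rfl⟩ := hy
      rw [he]
      simp only [Equiv.apply_symm_apply] at hxy ⊢
      exact hr2 u hu w hw hxy
    · rw [Finset.image_image]
      rw [← hr3]
      congr 1
      ext x
      simp [Function.comp]
  · intro x
    obtain ⟨C, hC, hx⟩ := h2 (e x)
    refine ⟨C.image e.symm, Finset.mem_image_of_mem _ hC, ?_⟩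
    simpa using Finset.mem_image_of_mem e.symm hx
  · intro C1 hC1 C2 hC2 hne
    simp only [Finset.mem_image] at hC1 hC2
    obtain ⟨C, hC, rfl⟩ := hC1
    obtain ⟨C', hC', rfl⟩ := hC2
    have : C ≠ C' := by rintro rfl; exact hne rfl
    exact (Finset.disjoint_image (Equiv.injective e.symm)).mpr (h3 C hC C' hC' this)

/-- Existence of an SCD for a product of chains. -/
lemma exists_scd : ∀ (n : ℕ) (kk : Fin n → ℕ), (∀ i, 1 ≤ kk i) →
    ∃ D : Finset (Finset (∀ i, Fin (kk i))),
      IsSCD (fun x => ∑ j, ((x j : ℕ))) (∑ j, (kk j - 1)) D := by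
  intro n
  induction n with
  | zero =>
    intro kk _
    refine ⟨{Finset.univ}, ?_, ?_, ?_⟩
    · intro C hC
      simp only [Finset.mem_singleton] at hC
      subst hC
      refine ⟨0, by simp, ?_, ?_⟩
      · intro x _ y _ _
        exact le_of_eq (Subsingleton.elim x y)
      · have : (Finset.univ : Finset (∀ i : Fin 0, Fin (kk i))) = {default} :=
          Finset.univ_unique
        rw [this]
        simp
    · intro x; exact ⟨Finset.univ, Finset.mem_singleton_self _, Finset.mem_univ x⟩
    · intro C hC C' hC' hne
      simp only [Finset.mem_singleton] at hC hC'
      exact absurd (hC.trans hC'.symm) hne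
  | succ n ih =>
    intro kk hk
    obtain ⟨D₀, hD₀⟩ := ih (fun i => kk i.castSucc) (fun i => hk _)
    obtain ⟨D₁, hD₁⟩ := hD₀.prod (kk (Fin.last n)) (hk _)
    -- transport along the snoc equivalence
    set e : (∀ i : Fin (n+1), Fin (kk i)) ≃
        ((∀ i : Fin n, Fin (kk i.castSucc)) × Fin (kk (Fin.last n))) :=
      { toFun := fun x => (fun i => x i.castSucc, x (Fin.last n))
        invFun := fun p => Fin.snoc p.1 p.2
        left_inv := by
          intro x
          funext i
          refine Fin.lastCases ?_ ?_ i
          · simp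
          · intro j; simp
        right_inv := by
          intro p
          refine Prod.ext ?_ ?_
          · funext i; simp
          · simp } with he_def
    have he : ∀ x y : (∀ i : Fin (n+1), Fin (kk i)), x ≤ y ↔ e x ≤ e y := by
      intro x y
      constructor
      · intro h
        exact ⟨fun i => h i.castSucc, h (Fin.last n)⟩
      · intro h i
        refine Fin.lastCases ?_ ?_ i
        · exact h.2
        · intro j; exact h.1 j
    have hD₂ := hD₁.map e he
    have hrk : (fun x : ∀ i : Fin (n+1), Fin (kk i) =>
        (∑ j : Fin n, ((x j.castSucc : ℕ))) + ((x (Fin.last n) : ℕ))) =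
        (fun x : ∀ i : Fin (n+1), Fin (kk i) => ∑ j, ((x j : ℕ))) := by
      funext x
      rw [Fin.sum_univ_castSucc]
    have hN : (∑ j : Fin n, (kk j.castSucc - 1)) + (kk (Fin.last n) - 1) =
        ∑ j : Fin (n+1), (kk j - 1) := by
      rw [Fin.sum_univ_castSucc]
    refine ⟨D₁.image (Finset.image e.symm), ?_⟩
    rw [← hrk, ← hN]
    exact hD₂

/-- The counting argument: a family with no (k+1)-chain is bounded by the sum of
level sizes over a set of at most k levels. -/
lemma card_le_of_scd {α : Type*} [Fintype α] [DecidableEq α] [PartialOrder α]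
    (rk : α → ℕ) (N k : ℕ) (hk : 1 ≤ k) {D : Finset (Finset α)}
    (hD : IsSCD rk N D) (F : Finset α)
    (hF : ¬ ∃ c : Fin (k + 1) → α, StrictMono c ∧ ∀ j, c j ∈ F) :
    ∃ S : Finset ℕ, S ⊆ Finset.range (N + 1) ∧ S.card ≤ k ∧
      F.card ≤ ∑ i ∈ S, (Finset.univ.filter (fun x => rk x = i)).card := by
  classical
  obtain ⟨h1, h2, h3⟩ := hD
  set m₀ := (N + 1 - k) / 2 with hm₀
  set S : Finset ℕ := Finset.Icc m₀ (m₀ + k - 1) ∩ Finset.range (N + 1) with hS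
  have hSsub : S ⊆ Finset.range (N + 1) := Finset.inter_subset_right
  have hScard : S.card ≤ k := by
    calc S.card ≤ (Finset.Icc m₀ (m₀ + k - 1)).card :=
          Finset.card_le_card Finset.inter_subset_left
    _ ≤ k := by rw [Nat.card_Icc]; omega
  refine ⟨S, hSsub, hScard, ?_⟩
  -- key bound per chain
  have key : ∀ C ∈ D, (F ∩ C).card ≤ (C.filter (fun x => rk x ∈ S)).card := by
    intro C hC
    obtain ⟨r, hr1, hr2, hr3⟩ := h1 C hC
    have hinj := IsSymChain.injOn (N := N) hr2
    have hinj' : Set.InjOn rk C := fun x hx y hy h => hinj x hx y hy h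
    -- |F ∩ C| ≤ |C|
    have hcardC : C.card = N - r + 1 - r := by
      rw [← Finset.card_image_of_injOn hinj', hr3, Nat.card_Icc]
    have hFC1 : (F ∩ C).card ≤ N - r + 1 - r :=
      hcardC ▸ Finset.card_le_card Finset.inter_subset_right
    -- |F ∩ C| ≤ k
    have hFC2 : (F ∩ C).card ≤ k := by
      by_contra hcon
      push_neg at hcon
      have hsub : F ∩ C ⊆ C := Finset.inter_subset_right
      have hscard : ((F ∩ C).image rk).card = (F ∩ C).card :=
        Finset.card_image_of_injOn (hinj'.mono (by exact_mod_cast hsub))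
      obtain ⟨t, htsub, htcard⟩ :=
        Finset.exists_subset_card_eq (n := k + 1) (by omega : k + 1 ≤ ((F ∩ C).image rk).card)
      set φ := t.orderEmbOfFin htcard with hφ
      have hmem : ∀ j : Fin (k + 1), ∃ x, x ∈ F ∩ C ∧ rk x = φ j := by
        intro j
        have : (φ j : ℕ) ∈ (F ∩ C).image rk := htsub (t.orderEmbOfFin_mem htcard j)
        simpa [eq_comm] using Finset.mem_image.mp this
      choose c hc1 hc2 using hmem
      refine hF ⟨c, ?_, fun j => (Finset.mem_inter.mp (hc1 j)).1⟩
      intro j j' hjj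
      have hφlt : (φ j : ℕ) < φ j' := (t.orderEmbOfFin htcard).strictMono hjj
      have hrklt : rk (c j) < rk (c j') := by rw [hc2, hc2]; exact hφlt
      have hCj := (Finset.mem_inter.mp (hc1 j)).2
      have hCj' := (Finset.mem_inter.mp (hc1 j')).2
      exact lt_of_le_of_ne (hr2 _ hCj _ hCj' hrklt.le)
        (fun h => absurd (h ▸ rfl) hrklt.ne)
    -- the filtered chain has enough elements
    have himg : (C.filter (fun x => rk x ∈ S)).card
        = ((C.image rk).filter (fun i => i ∈ S)).card := by
      rw [Finset.filter_image]
      exact (Finset.card_image_of_injOn (hinj'.mono (by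
        intro x hx; exact Finset.mem_filter.mp hx |>.1))).symm
    rw [himg, hr3]
    have hIcc : (Finset.Icc r (N - r)).filter (fun i => i ∈ S)
        = Finset.Icc (max r m₀) (min (N - r) (m₀ + k - 1)) := by
      ext x
      simp only [Finset.mem_filter, Finset.mem_Icc, hS, Finset.mem_inter,
        Finset.mem_range]
      omega
    rw [hIcc, Nat.card_Icc]
    omega
  -- assemble
  have hcover : F = D.biUnion (fun C => F ∩ C) := by
    ext x
    simp only [Finset.mem_biUnion, Finset.mem_inter]
    constructor
    · intro hx
      obtain ⟨C, hC, hxC⟩ := h2 x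
      exact ⟨C, hC, hx, hxC⟩
    · rintro ⟨C, _, hx, _⟩; exact hx
  have hdisj1 : ∀ C ∈ D, ∀ C' ∈ D, C ≠ C' → Disjoint (F ∩ C) (F ∩ C') := by
    intro C hC C' hC' hne
    exact Finset.disjoint_of_subset_left Finset.inter_subset_right
      (Finset.disjoint_of_subset_right Finset.inter_subset_right (h3 C hC C' hC' hne))
  have hcard1 : F.card = ∑ C ∈ D, (F ∩ C).card := by
    conv_lhs => rw [hcover]
    exact Finset.card_biUnion hdisj1
  have hcover2 : Finset.univ.filter (fun x => rk x ∈ S)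
      = D.biUnion (fun C => C.filter (fun x => rk x ∈ S)) := by
    ext x
    simp only [Finset.mem_biUnion, Finset.mem_filter, Finset.mem_univ, true_and]
    constructor
    · intro hx
      obtain ⟨C, hC, hxC⟩ := h2 x
      exact ⟨C, hC, hxC, hx⟩
    · rintro ⟨C, _, _, hx⟩; exact hx
  have hdisj2 : ∀ C ∈ D, ∀ C' ∈ D, C ≠ C' →
      Disjoint (C.filter (fun x => rk x ∈ S)) (C'.filter (fun x => rk x ∈ S)) := by
    intro C hC C' hC' hne
    exact Finset.disjoint_of_subset_left (Finset.filter_subset _ _)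
      (Finset.disjoint_of_subset_right (Finset.filter_subset _ _) (h3 C hC C' hC' hne))
  have hcard2 : (Finset.univ.filter (fun x => rk x ∈ S)).card
      = ∑ C ∈ D, (C.filter (fun x => rk x ∈ S)).card := by
    rw [hcover2, Finset.card_biUnion hdisj2]
  have hfiber : (Finset.univ.filter (fun x => rk x ∈ S)).card
      = ∑ i ∈ S, (Finset.univ.filter (fun x => rk x = i)).card := by
    rw [Finset.card_eq_sum_card_fiberwise (f := rk) (s := Finset.univ.filter (fun x => rk x ∈ S)) (t := S)
      (fun x hx => (Finset.mem_filter.mp hx).2)]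
    refine Finset.sum_congr rfl ?_
    intro i hi
    congr 1
    ext x
    simp only [Finset.mem_filter, Finset.mem_univ, true_and]
    constructor
    · rintro ⟨_, h⟩; exact h
    · intro h; exact ⟨h ▸ hi, h⟩
  calc F.card = ∑ C ∈ D, (F ∩ C).card := hcard1
    _ ≤ ∑ C ∈ D, (C.filter (fun x => rk x ∈ S)).card :=
        Finset.sum_le_sum key
    _ = (Finset.univ.filter (fun x => rk x ∈ S)).card := hcard2.symm
    _ = ∑ i ∈ S, (Finset.univ.filter (fun x => rk x = i)).card := hfiber

/-- A k-Sperner family in L(k₁,…,kₙ) has size at most the sum of the k largest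
rank sizes |L_i| (expressed as the maximum of ∑_{i ∈ S} |L_i| over index sets S
with at most k elements). -/
theorem kSperner_card_le (n : ℕ) (kk : Fin n → ℕ) (k : ℕ)
    (F : Finset (∀ i, Fin (kk i)))
    (hF : ¬ ∃ c : Fin (k + 1) → (∀ i, Fin (kk i)), StrictMono c ∧ ∀ j, c j ∈ F) :
    F.card ≤
      ((Finset.range (∑ j, (kk j - 1) + 1)).powerset.filter (fun S => S.card ≤ k)).sup
        (fun S => ∑ i ∈ S,
          (Finset.univ.filter (fun x : ∀ i, Fin (kk i) => ∑ j, ((x j : ℕ)) = i)).card) := by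
  classical
  by_cases hempty : ∃ i, kk i = 0
  · obtain ⟨i, hi⟩ := hempty
    have hFe : F = ∅ :=
      Finset.eq_empty_of_forall_notMem fun x _ => absurd (x i).isLt (by omega)
    simp [hFe]
  · push_neg at hempty
    have hk1 : ∀ i, 1 ≤ kk i := fun i => Nat.one_le_iff_ne_zero.mpr (hempty i)
    rcases Nat.eq_zero_or_pos k with rfl | hkpos
    · have hFe : F = ∅ := by
        by_contra h
        obtain ⟨x, hx⟩ := Finset.nonempty_iff_ne_empty.mpr h
        exact hF ⟨fun _ => x,
          fun a b hab => absurd hab (by rw [Fin.lt_def]; omega),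
          fun _ => hx⟩
      simp [hFe]
    · obtain ⟨D, hD⟩ := exists_scd n kk hk1
      obtain ⟨S, hS1, hS2, hS3⟩ := card_le_of_scd _ _ k hkpos hD F hF
      refine hS3.trans (Finset.le_sup (f := fun S => ∑ i ∈ S,
        (Finset.univ.filter (fun x : ∀ i, Fin (kk i) => ∑ j, ((x j : ℕ)) = i)).card) ?_)
      simp only [Finset.mem_filter, Finset.mem_powerset]
      exact ⟨hS1, hS2⟩
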